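/- Let Ψ±(x,y,z) = a±₀₀₀ + a±₁₀₀ x + a±₀₁₀ y + a±₀₀₁ z be affine functions, let h satisfy ∫₀^{2π} h(cos s, sin s) ds = 0, I_h(θ) = ∫₀^θ h(cos s, sin s) ds, c⁰₁₀ = ∫₀^π I_h(θ) dθ and c⁰₀₁ = ∫_π^{2π} I_h(θ) dθ. Then ψ₂(r, z) = r[∫₀^π Ψ⁺(r cos θ, r sin θ, z + I_h(θ)) dθ + ∫_π^{2π} Ψ⁻(r cos θ, r sin θ, z + I_h(θ)) dθ] equals r[C₁₀ r + C₀₁ z + C₀₀], where C₁₀ = 2(a⁺₀₁₀ − a⁻₀₁₀), C₀₁ = π(a⁺₀₀₁ + a⁻₀₀₁), and C₀₀ = π(a⁺₀₀₀ + a⁻₀₀₀) + c⁰₁₀ a⁺₀₀₁ + c⁰₀₁ a⁻₀₀₁. -/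

import Mathlib

open Real

lemma affine_interval_integral (a b c d A B : ℝ) (Ih : ℝ → ℝ) (hIhc : Continuous Ih) :
    (∫ θ in A..B, (c + a * Real.cos θ + b * Real.sin θ + d * Ih θ))
    = c * (B - A) + a * (Real.sin B - Real.sin A) + b * (Real.cos A - Real.cos B)
      + d * (∫ θ in A..B, Ih θ) := by
  have h1 : IntervalIntegrable (fun θ => c + a * Real.cos θ) MeasureTheory.volume A B :=
    (by continuity : Continuous fun θ => c + a * Real.cos θ).intervalIntegrable A B
  have h2 : IntervalIntegrable (fun θ => b * Real.sin θ) MeasureTheory.volume A B :=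
    (by continuity : Continuous fun θ => b * Real.sin θ).intervalIntegrable A B
  have h3 : IntervalIntegrable (fun θ => d * Ih θ) MeasureTheory.volume A B :=
    (continuous_const.mul hIhc).intervalIntegrable A B
  rw [show (fun θ => c + a * Real.cos θ + b * Real.sin θ + d * Ih θ)
      = fun θ => ((c + a * Real.cos θ) + b * Real.sin θ) + d * Ih θ from rfl]
  rw [intervalIntegral.integral_add (h1.add h2) h3, intervalIntegral.integral_add h1 h2]
  rw [intervalIntegral.integral_add (g := fun x => a * Real.cos x) (intervalIntegrable_const (c := c))
      ((continuous_const.mul Real.continuous_cos).intervalIntegrable A B)]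
  rw [intervalIntegral.integral_const, intervalIntegral.integral_const_mul,
    intervalIntegral.integral_const_mul, intervalIntegral.integral_const_mul,
    integral_cos, integral_sin, smul_eq_mul]
  ring

/-- explicit averaged function for a piecewise affine perturbation. -/
theorem averaged_function_affine
    (ap000 ap100 ap010 ap001 am000 am100 am010 am001 : ℝ)
    (Ψp Ψm : ℝ → ℝ → ℝ → ℝ)
    (hΨp : ∀ x y z : ℝ, Ψp x y z = ap000 + ap100 * x + ap010 * y + ap001 * z)
    (hΨm : ∀ x y z : ℝ, Ψm x y z = am000 + am100 * x + am010 * y + am001 * z)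
    (h : ℝ × ℝ → ℝ) (hh : Continuous h)
    (hmean : (∫ s in (0:ℝ)..(2 * π), h (Real.cos s, Real.sin s)) = 0)
    (Ih : ℝ → ℝ)
    (hIh : ∀ θ : ℝ, Ih θ = ∫ s in (0:ℝ)..θ, h (Real.cos s, Real.sin s))
    (c010 c001 : ℝ)
    (hc010 : c010 = ∫ θ in (0:ℝ)..π, Ih θ)
    (hc001 : c001 = ∫ θ in π..(2 * π), Ih θ) :
    ∀ r z : ℝ, 0 < r →
      r * ((∫ θ in (0:ℝ)..π, Ψp (r * Real.cos θ) (r * Real.sin θ) (z + Ih θ)) +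
           (∫ θ in π..(2 * π), Ψm (r * Real.cos θ) (r * Real.sin θ) (z + Ih θ)))
      = r * ((2 * (ap010 - am010)) * r + (π * (ap001 + am001)) * z +
             (π * (ap000 + am000) + c010 * ap001 + c001 * am001)) := by
  intro r z hr
  have hIhc : Continuous Ih := by
    have heq : Ih = fun θ => ∫ s in (0:ℝ)..θ, h (Real.cos s, Real.sin s) := funext hIh
    rw [heq]
    exact intervalIntegral.continuous_primitive
      (fun a b => ((hh.comp (by continuity)).intervalIntegrable a b)) 0
  have e1 : (∫ θ in (0:ℝ)..π, Ψp (r * Real.cos θ) (r * Real.sin θ) (z + Ih θ))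
      = (ap000 + ap001 * z) * π + (ap100 * r) * 0 + (ap010 * r) * 2 + ap001 * c010 := by
    have hfun : (fun θ => Ψp (r * Real.cos θ) (r * Real.sin θ) (z + Ih θ))
        = fun θ => (ap000 + ap001 * z) + (ap100 * r) * Real.cos θ
            + (ap010 * r) * Real.sin θ + ap001 * Ih θ := by
      funext θ; rw [hΨp]; ring
    rw [hfun, affine_interval_integral _ _ _ _ _ _ _ hIhc, ← hc010]
    rw [Real.sin_pi, Real.sin_zero, Real.cos_pi, Real.cos_zero]
    ring
  have e2 : (∫ θ in π..(2 * π), Ψm (r * Real.cos θ) (r * Real.sin θ) (z + Ih θ))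
      = (am000 + am001 * z) * π + (am100 * r) * 0 + (am010 * r) * (-2) + am001 * c001 := by
    have hfun : (fun θ => Ψm (r * Real.cos θ) (r * Real.sin θ) (z + Ih θ))
        = fun θ => (am000 + am001 * z) + (am100 * r) * Real.cos θ
            + (am010 * r) * Real.sin θ + am001 * Ih θ := by
      funext θ; rw [hΨm]; ring
    rw [hfun, affine_interval_integral _ _ _ _ _ _ _ hIhc, ← hc001]
    rw [Real.sin_two_pi, Real.sin_pi, Real.cos_two_pi, Real.cos_pi]
    ring
  rw [e1, e2]; ring
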